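/- Let ι be a finite type, T ≥ 3, Γ_1, …, Γ_T ⊆ ι pairwise disjoint finsets, Γ̃ ⊆ ι a finset with |Γ_j ∩ Γ̃| = 1 for each j, ψ ∈ H a unit vector, and a : Fin T → {0,1} a valid input (∑_j a_j even). Then the winning probability on input a satisfies p(ψ, a) = (1/2)·( 1 + ∑_{σ : ι → ZMod 2} (−1)^{∑_j a_j·w_j(σ)} · ψ(σ) · conj(ψ(σ + 𝟙_{Γ̃})) ), where w_j(σ) ∈ {0,1} is the lift of ∑_{b∈Γ_j} σ b ∈ ZMod 2 and the exponent ∑_j a_j·w_j(σ) is computed in ℤ. (In particular the sum on the right-hand side is real.) -/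

import Mathlib

open Finset

noncomputable section

/-- The Hilbert space of qubits at the elements of `ι`. -/
abbrev QubitSpace (ι : Type*) := (ι → ZMod 2) → ℂ

/-- Indicator function of a finset, valued in `ZMod 2`. -/
def indicZ2 {ι : Type*} [DecidableEq ι] (S : Finset ι) : ι → ZMod 2 :=
  fun b => if b ∈ S then 1 else 0

/-- The Z-type operator `W_S`. -/
def Wop {ι : Type*} [DecidableEq ι] (S : Finset ι) :
    Module.End ℂ (QubitSpace ι) where
  toFun ψ := fun σ => (-1 : ℂ) ^ (∑ b ∈ S, σ b).val * ψ σ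
  map_add' ψ φ := by funext σ; simp [mul_add]
  map_smul' c ψ := by funext σ; simp; ring

/-- The X-type operator `V_S`. -/
def Vop {ι : Type*} [DecidableEq ι] (S : Finset ι) :
    Module.End ℂ (QubitSpace ι) where
  toFun ψ := fun σ => ψ (σ + indicZ2 S)
  map_add' _ _ := rfl
  map_smul' _ _ := rfl

/-- The inner product `⟨ψ, φ⟩ = ∑_σ conj (ψ σ) · φ σ`. -/
def qInner {ι : Type*} [Fintype ι] [DecidableEq ι] (ψ φ : QubitSpace ι) : ℂ :=
  ∑ σ, (starRingEnd ℂ) (ψ σ) * φ σ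

/-- Square root of an involution: `W^{1/2} = (1/2)(1+W) + (i/2)(1−W)`. -/
def sqrtInv {E : Type*} [AddCommGroup E] [Module ℂ E] (W : Module.End ℂ E) :
    Module.End ℂ E :=
  ((2 : ℂ)⁻¹) • (1 + W) + (Complex.I * (2 : ℂ)⁻¹) • (1 - W)

/-- `W^{a/2}` for `a ∈ {0,1}`: the identity if `a = 0`, `W^{1/2}` if `a = 1`. -/
def halfPow {E : Type*} [AddCommGroup E] [Module ℂ E] (W : Module.End ℂ E)
    (a : ℕ) : Module.End ℂ E :=
  if a = 0 then 1 else sqrtInv W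

/-- The post-strategy state `ψ' = (∏_j W_{Γ_j}^{a_j/2}) ψ` (the factors are
commuting diagonal operators, so the order of the product is immaterial). -/
def postState {ι : Type*} [DecidableEq ι] {T : ℕ} (Γ : Fin T → Finset ι)
    (a : Fin T → ℕ) (ψ : QubitSpace ι) : QubitSpace ι :=
  ((List.ofFn fun j => halfPow (Wop (Γ j)) (a j)).prod) ψ

/-- The X-basis vector `χ_y(σ) = 2^{−|ι|/2} (−1)^{∑_b σ(b)·y(b)}`. -/
def chi {ι : Type*} [Fintype ι] (y : ι → ZMod 2) : QubitSpace ι :=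
  fun σ => (((Real.sqrt 2 ^ Fintype.card ι)⁻¹ : ℝ) : ℂ) *
    (-1 : ℂ) ^ (∑ b, (σ b).val * (y b).val)

/-- `r = ((∑_j a_j)/2) mod 2 ∈ ZMod 2`. -/
def rOf {T : ℕ} (a : Fin T → ℕ) : ZMod 2 := (((∑ j, a j) / 2 : ℕ) : ZMod 2)

/-- The winning probability on input `a`:
`p(ψ, a) = ∑_{y : ∑_{b ∈ Γ̃} y b = r} |⟨χ_y, ψ'⟩|²`. -/
def winProb {ι : Type*} [Fintype ι] [DecidableEq ι] {T : ℕ}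
    (Γ : Fin T → Finset ι) (Γt : Finset ι) (a : Fin T → ℕ)
    (ψ : QubitSpace ι) : ℝ :=
  ∑ y ∈ univ.filter (fun y : ι → ZMod 2 => ∑ b ∈ Γt, y b = rOf a),
    ‖qInner (chi y) (postState Γ a ψ)‖ ^ 2

/-- The quantum winning probability: the average of `p(ψ, a)` over the
`2^{T−1}` valid inputs `a` (those with `∑_j a_j` even). -/
def quantumWinProb {ι : Type*} [Fintype ι] [DecidableEq ι] {T : ℕ}
    (Γ : Fin T → Finset ι) (Γt : Finset ι) (ψ : QubitSpace ι) : ℝ :=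
  (∑ a ∈ univ.filter (fun a : Fin T → Fin 2 => Even (∑ j, (a j : ℕ))),
      winProb Γ Γt (fun j => (a j : ℕ)) ψ) / 2 ^ (T - 1)

/-- The computational basis vector `δ_σ`. -/
def deltaVec {ι : Type*} [DecidableEq (ι → ZMod 2)] (σ : ι → ZMod 2) :
    QubitSpace ι :=
  fun τ => if τ = σ then 1 else 0

namespace WEDF

lemma zmod2_cases (x : ZMod 2) : x = 0 ∨ x = 1 := by revert x; decide

/-- `(-1)^x` for `x : ZMod 2`. -/
def np (x : ZMod 2) : ℂ := (-1) ^ x.val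

lemma val01 : ((0 : ZMod 2)).val = 0 ∧ ((1 : ZMod 2)).val = 1 ∧ ((2 : ZMod 2)).val = 0 := by
  decide

lemma np_add (x y : ZMod 2) : np (x + y) = np x * np y := by
  rcases zmod2_cases x with h | h <;> rcases zmod2_cases y with h' | h' <;>
    subst h <;> subst h' <;> norm_num [np, val01.1, val01.2.1, val01.2.2]

lemma np_zero : np 0 = 1 := by simp [np, val01.1]

lemma np_one : np 1 = -1 := by simp [np, val01.2.1]

lemma np_sum {α : Type*} (s : Finset α) (f : α → ZMod 2) :
    np (∑ i ∈ s, f i) = ∏ i ∈ s, np (f i) := by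
  classical
  induction s using Finset.cons_induction with
  | empty => simp [np_zero]
  | cons a s ha ih => rw [Finset.sum_cons, Finset.prod_cons, np_add, ih]

lemma np_natCast (m : ℕ) : np (m : ZMod 2) = (-1) ^ m := by
  induction m with
  | zero => simpa using np_zero
  | succ k ih =>
      have h : ((k+1 : ℕ) : ZMod 2) = (k : ZMod 2) + 1 := by push_cast; ring
      rw [h, np_add, ih, pow_succ, np_one]

lemma pow_val_mul (x y : ZMod 2) : ((-1 : ℂ)) ^ (x.val * y.val) = np (x * y) := by
  rcases zmod2_cases x with h | h <;> rcases zmod2_cases y with h' | h' <;>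
    subst h <;> subst h' <;> norm_num [np, val01.1, val01.2.1, val01.2.2]

lemma conj_np (x : ZMod 2) : (starRingEnd ℂ) (np x) = np x := by
  simp [np]

lemma sum_zmod2 (f : ZMod 2 → ℂ) : ∑ v : ZMod 2, f v = f 0 + f 1 :=
  Fin.sum_univ_two f

/-- Character orthogonality. -/
lemma orth {ι : Type*} [Fintype ι] [DecidableEq ι] (z : ι → ZMod 2) :
    ∑ y : ι → ZMod 2, np (∑ b, z b * y b)
      = if z = 0 then ((2 : ℂ) ^ Fintype.card ι) else 0 := by
  have h1 : ∀ y : ι → ZMod 2, np (∑ b, z b * y b) = ∏ b, np (z b * y b) :=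
    fun y => np_sum _ _
  simp_rw [h1]
  rw [← Fintype.piFinset_univ,
    ← Finset.prod_univ_sum (fun _ => (univ : Finset (ZMod 2))) (fun b v => np (z b * v))]
  have h2 : ∀ b, (∑ v : ZMod 2, np (z b * v)) = if z b = 0 then 2 else 0 := by
    intro b
    rw [sum_zmod2]
    rcases zmod2_cases (z b) with h | h <;> simp [h, np_zero, np_one] <;> norm_num
  simp_rw [h2]
  by_cases hz : z = 0
  · simp [hz, Finset.prod_const]
  · obtain ⟨b, hb⟩ : ∃ b, z b ≠ 0 := by
      by_contra h; push_neg at h; exact hz (funext h)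
    rw [if_neg hz]
    exact Finset.prod_eq_zero (Finset.mem_univ b) (by simp [hb])

/-- Multiplication operator by a diagonal symbol. -/
def diagOp {ι : Type*} (g : (ι → ZMod 2) → ℂ) : Module.End ℂ (QubitSpace ι) where
  toFun ψ := fun σ => g σ * ψ σ
  map_add' ψ φ := by funext σ; simp [mul_add]
  map_smul' c ψ := by funext σ; simp; ring

@[simp] lemma diagOp_apply {ι : Type*} (g : (ι → ZMod 2) → ℂ) (ψ : QubitSpace ι)
    (σ : ι → ZMod 2) : diagOp g ψ σ = g σ * ψ σ := rfl

def diagHom {ι : Type*} : ((ι → ZMod 2) → ℂ) →* Module.End ℂ (QubitSpace ι) where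
  toFun := diagOp
  map_one' := by
    apply LinearMap.ext; intro ψ; funext σ; simp [diagOp]
  map_mul' g h := by
    apply LinearMap.ext; intro ψ; funext σ
    simp [diagOp, Module.End.mul_apply]
    ring

lemma zmod2_val_le (x : ZMod 2) : x.val ≤ 1 := by revert x; decide

lemma halfPow_Wop {ι : Type*} [DecidableEq ι] (S : Finset ι) (m : ℕ) (hm : m ≤ 1) :
    halfPow (Wop S) m = diagOp (fun σ => Complex.I ^ (m * (∑ b ∈ S, σ b).val)) := by
  interval_cases m
  · apply LinearMap.ext; intro ψ; funext σ; simp [halfPow, diagOp]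
  · apply LinearMap.ext; intro ψ; funext σ
    simp only [halfPow, if_neg one_ne_zero, sqrtInv, diagOp_apply]
    have h01 : (∑ b ∈ S, σ b).val = 0 ∨ (∑ b ∈ S, σ b).val = 1 := by
      have := zmod2_val_le (∑ b ∈ S, σ b); omega
    simp only [LinearMap.add_apply, LinearMap.smul_apply, LinearMap.sub_apply,
      Module.End.one_apply, Wop, LinearMap.coe_mk, AddHom.coe_mk, Pi.add_apply,
      Pi.smul_apply, Pi.sub_apply, smul_eq_mul]
    rcases h01 with h | h <;> rw [h] <;> ring

lemma postState_eq {ι : Type*} [Fintype ι] [DecidableEq ι] {T : ℕ}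
    (Γ : Fin T → Finset ι) (a : Fin T → ℕ) (ha : ∀ j, a j ≤ 1) (ψ : QubitSpace ι) :
    postState Γ a ψ
      = fun σ => Complex.I ^ (∑ j, a j * (∑ b ∈ Γ j, σ b).val) * ψ σ := by
  unfold postState
  have hfn : (fun j => halfPow (Wop (Γ j)) (a j))
      = fun j => diagHom (fun σ => Complex.I ^ (a j * (∑ b ∈ Γ j, σ b).val)) :=
    funext fun j => halfPow_Wop (Γ j) (a j) (ha j)
  rw [hfn]
  have h2 : (List.ofFn fun j => diagHom (ι := ι) (fun σ => Complex.I ^ (a j * (∑ b ∈ Γ j, σ b).val)))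
      = List.map diagHom (List.ofFn fun j => fun σ => Complex.I ^ (a j * (∑ b ∈ Γ j, σ b).val)) := by
    rw [List.map_ofFn]; rfl
  rw [h2, ← map_list_prod diagHom, List.prod_ofFn]
  funext σ
  show diagOp _ ψ σ = _
  rw [diagOp_apply]
  congr 1
  show (∏ j, fun σ => Complex.I ^ (a j * (∑ b ∈ Γ j, σ b).val)) σ = _
  rw [Finset.prod_apply, Finset.prod_pow_eq_pow_sum]

/-- Phase arithmetic. -/
lemma phase (Anat A' S : ℕ) (h : Anat + A' = S) (hS : Even S) :
    np ((S / 2 : ℕ) : ZMod 2) * (Complex.I ^ Anat * (starRingEnd ℂ) (Complex.I ^ A'))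
      = (-1 : ℂ) ^ Anat := by
  obtain ⟨s, hs⟩ := hS
  have hdiv : S / 2 = s := by omega
  rw [hdiv, np_natCast, map_pow, Complex.conj_I,
    show (-Complex.I)^A' = (-1:ℂ)^A' * Complex.I^A' by rw [neg_pow]]
  have h2 : Complex.I ^ Anat * Complex.I ^ A' = Complex.I ^ S := by rw [← pow_add, h]
  have h3 : Complex.I ^ S = (-1 : ℂ) ^ s := by
    rw [hs, ← two_mul, pow_mul, Complex.I_sq]
  have e1 : ((-1:ℂ))^Anat * (-1)^A' = 1 := by
    rw [← pow_add, h, hs, ← two_mul, pow_mul]; norm_num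
  have e2 : ((-1:ℂ))^Anat * (-1)^Anat = 1 := by
    rw [← pow_add, ← two_mul, pow_mul]; norm_num
  have e3 : ((-1:ℂ))^A' = (-1)^Anat := by
    calc (-1:ℂ)^A' = ((-1)^Anat * (-1)^Anat) * (-1)^A' := by rw [e2, one_mul]
    _ = (-1)^Anat * ((-1)^Anat * (-1)^A') := by ring
    _ = (-1)^Anat := by rw [e1, mul_one]
  calc (-1:ℂ)^s * (Complex.I ^ Anat * ((-1)^A' * Complex.I ^ A'))
      = (-1)^A' * ((-1)^s * (Complex.I^Anat * Complex.I^A')) := by ring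
    _ = (-1)^A' * ((-1)^s * (-1)^s) := by rw [h2, h3]
    _ = (-1)^A' := by rw [← pow_add, ← two_mul, pow_mul]; norm_num
    _ = (-1)^Anat := e3

end WEDF

open WEDF

/-- for a unit vector `ψ` and a valid input `a` (each `a j ∈ {0,1}`
and `∑_j a_j` even), the winning probability on input `a` is
`p(ψ, a) = (1/2)(1 + ∑_σ (−1)^{∑_j a_j w_j(σ)} ψ(σ) conj(ψ(σ + 𝟙_{Γ̃})))`,
where `w_j(σ)` is the lift of `∑_{b ∈ Γ_j} σ b ∈ ZMod 2`. In particular the sum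
on the right-hand side is real. -/
theorem winProb_eq_diagonal_fidelity {ι : Type*} [Fintype ι] [DecidableEq ι]
    (T : ℕ) (hT : 3 ≤ T) (Γ : Fin T → Finset ι)
    (hdisj : ∀ j k, j ≠ k → Disjoint (Γ j) (Γ k))
    (Γt : Finset ι) (hcap : ∀ j, (Γ j ∩ Γt).card = 1)
    (ψ : QubitSpace ι) (hψ : qInner ψ ψ = 1)
    (a : Fin T → ℕ) (ha : ∀ j, a j ≤ 1) (hae : Even (∑ j, a j)) :
    (winProb Γ Γt a ψ : ℂ)
      = (1 / 2) *
          (1 + ∑ σ : ι → ZMod 2,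
            (-1 : ℂ) ^ (∑ j, a j * (∑ b ∈ Γ j, σ b).val) *
              (ψ σ * (starRingEnd ℂ) (ψ (σ + indicZ2 Γt)))) := by
  classical
  set n := Fintype.card ι with hn
  set c : ℝ := (Real.sqrt 2 ^ n)⁻¹ with hc
  set t : ι → ZMod 2 := indicZ2 Γt with ht
  set A : (ι → ZMod 2) → ℕ := fun σ => ∑ j, a j * (∑ b ∈ Γ j, σ b).val with hA
  set Φ : QubitSpace ι := fun σ => Complex.I ^ A σ * ψ σ with hΦ
  have hφ : postState Γ a ψ = Φ := postState_eq Γ a ha ψ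
  set r : ZMod 2 := rOf a with hr
  -- the X-basis vector via np
  have hchi : ∀ (y σ : ι → ZMod 2), chi y σ = (c : ℂ) * np (∑ b, σ b * y b) := by
    intro y σ
    unfold chi
    rw [← hn, ← hc]
    congr 1
    rw [np_sum, ← Finset.prod_pow_eq_pow_sum]
    exact Finset.prod_congr rfl fun b _ => pow_val_mul (σ b) (y b)
  -- the inner product
  have hq : ∀ y, qInner (chi y) (postState Γ a ψ)
      = (c : ℂ) * ∑ σ, np (∑ b, σ b * y b) * Φ σ := by
    intro y
    unfold qInner
    rw [hφ, Finset.mul_sum]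
    refine Finset.sum_congr rfl fun σ _ => ?_
    rw [hchi, map_mul, Complex.conj_ofReal, conj_np]
    ring
  have hqc : ∀ y, (starRingEnd ℂ) (qInner (chi y) (postState Γ a ψ))
      = (c : ℂ) * ∑ τ, np (∑ b, τ b * y b) * (starRingEnd ℂ) (Φ τ) := by
    intro y
    rw [hq, map_mul, Complex.conj_ofReal, map_sum]
    congr 1
    exact Finset.sum_congr rfl fun τ _ => by rw [map_mul, conj_np]
  -- step 1: cast the winning probability
  have hw1 : (winProb Γ Γt a ψ : ℂ)
      = ∑ y : ι → ZMod 2, (if ∑ b ∈ Γt, y b = r then (1 : ℂ) else 0) *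
          (qInner (chi y) (postState Γ a ψ) *
            (starRingEnd ℂ) (qInner (chi y) (postState Γ a ψ))) := by
    unfold winProb
    rw [← hr]
    push_cast
    rw [Finset.sum_filter]
    refine Finset.sum_congr rfl fun y _ => ?_
    by_cases h : ∑ b ∈ Γt, y b = r
    · rw [if_pos h, if_pos h, one_mul, ← Complex.ofReal_pow, Complex.sq_norm]
      exact (Complex.mul_conj _).symm
    · rw [if_neg h, if_neg h, zero_mul]
  -- indicator identity
  have hind : ∀ x : ZMod 2, (if x = r then (1 : ℂ) else 0) = 1/2 * (1 + np r * np x) := by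
    intro x
    by_cases h : x = r
    · subst h
      rw [if_pos rfl]
      rcases zmod2_cases r with h1 | h1 <;> rw [h1] <;> norm_num [np_zero, np_one]
    · rw [if_neg h]
      rcases zmod2_cases x with h1 | h1 <;> rcases zmod2_cases r with h2 | h2 <;>
        first
          | exact absurd (h1.trans h2.symm) h
          | (rw [h1, h2]; norm_num [np_zero, np_one])
  -- the condition sum as a bilinear pairing with the indicator
  have hLt : ∀ y : ι → ZMod 2, ∑ b ∈ Γt, y b = ∑ b, t b * y b := by
    intro y
    rw [ht]
    simp [indicZ2, ite_mul, Finset.sum_ite_mem, Finset.univ_inter]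
  -- bilinearity
  have hBadd : ∀ (u v y : ι → ZMod 2),
      np (∑ b, (u + v) b * y b) = np (∑ b, u b * y b) * np (∑ b, v b * y b) := by
    intro u v y
    rw [← np_add, ← Finset.sum_add_distrib]
    exact congrArg np (Finset.sum_congr rfl fun b _ => by simp [Pi.add_apply, add_mul])
  -- condition conversions
  have hiff1 : ∀ σ τ : ι → ZMod 2, (σ + τ = 0) ↔ τ = σ := by
    intro σ τ
    rw [funext_iff, funext_iff]
    refine forall_congr' fun b => ?_
    have h := (by decide : ∀ x y : ZMod 2, x + y = 0 ↔ y = x) (σ b) (τ b)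
    simpa using h
  have hiff2 : ∀ σ τ : ι → ZMod 2, (σ + τ + t = 0) ↔ τ = σ + t := by
    intro σ τ
    rw [funext_iff, funext_iff]
    refine forall_congr' fun b => ?_
    have h := (by decide : ∀ x y z : ZMod 2, x + y + z = 0 ↔ y = x + z) (σ b) (τ b) (t b)
    simpa using h
  -- expand the product of sums
  have expand : ∀ y, qInner (chi y) (postState Γ a ψ) *
        (starRingEnd ℂ) (qInner (chi y) (postState Γ a ψ))
      = ∑ σ : ι → ZMod 2, ∑ τ : ι → ZMod 2,
          (c : ℂ) * (c : ℂ) *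
            (np (∑ b, σ b * y b) * np (∑ b, τ b * y b) * (Φ σ * (starRingEnd ℂ) (Φ τ))) := by
    intro y
    rw [hqc y, hq y, mul_mul_mul_comm, Finset.sum_mul_sum, Finset.mul_sum]
    refine Finset.sum_congr rfl fun σ _ => ?_
    rw [Finset.mul_sum]
    refine Finset.sum_congr rfl fun τ _ => by ring
  -- step 2: triple sum
  have hw2 : (winProb Γ Γt a ψ : ℂ)
      = ∑ σ : ι → ZMod 2, ∑ τ : ι → ZMod 2, ∑ y : ι → ZMod 2,
          1/2 * (1 + np r * np (∑ b, t b * y b)) *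
            ((c : ℂ) * (c : ℂ) *
              (np (∑ b, σ b * y b) * np (∑ b, τ b * y b) * (Φ σ * (starRingEnd ℂ) (Φ τ)))) := by
    rw [hw1]
    have step : ∀ y : ι → ZMod 2,
        (if ∑ b ∈ Γt, y b = r then (1 : ℂ) else 0) *
          (qInner (chi y) (postState Γ a ψ) *
            (starRingEnd ℂ) (qInner (chi y) (postState Γ a ψ)))
        = ∑ σ : ι → ZMod 2, ∑ τ : ι → ZMod 2,
            1/2 * (1 + np r * np (∑ b, t b * y b)) *
              ((c : ℂ) * (c : ℂ) *
                (np (∑ b, σ b * y b) * np (∑ b, τ b * y b) * (Φ σ * (starRingEnd ℂ) (Φ τ)))) := by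
      intro y
      rw [hind, hLt, expand y, Finset.mul_sum]
      refine Finset.sum_congr rfl fun σ _ => ?_
      rw [Finset.mul_sum]
    rw [Finset.sum_congr rfl fun y _ => step y, Finset.sum_comm]
    exact Finset.sum_congr rfl fun σ _ => Finset.sum_comm
  -- step 3: evaluate the inner sum over y
  have key : ∀ σ τ : ι → ZMod 2,
      (∑ y : ι → ZMod 2,
        1/2 * (1 + np r * np (∑ b, t b * y b)) *
          ((c : ℂ) * (c : ℂ) *
            (np (∑ b, σ b * y b) * np (∑ b, τ b * y b) * (Φ σ * (starRingEnd ℂ) (Φ τ)))))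
      = (c : ℂ) * (c : ℂ) * (Φ σ * (starRingEnd ℂ) (Φ τ)) * (1/2) *
          ((if τ = σ then ((2:ℂ)^n) else 0) + np r * (if τ = σ + t then ((2:ℂ)^n) else 0)) := by
    intro σ τ
    have h1 : ∀ y : ι → ZMod 2,
        1/2 * (1 + np r * np (∑ b, t b * y b)) *
          ((c : ℂ) * (c : ℂ) *
            (np (∑ b, σ b * y b) * np (∑ b, τ b * y b) * (Φ σ * (starRingEnd ℂ) (Φ τ))))
        = (c : ℂ) * (c : ℂ) * (Φ σ * (starRingEnd ℂ) (Φ τ)) * (1/2) *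
            (np (∑ b, (σ + τ) b * y b) + np r * np (∑ b, (σ + τ + t) b * y b)) := by
      intro y
      rw [hBadd (σ + τ) t y, hBadd σ τ y]
      ring
    rw [Finset.sum_congr rfl fun y _ => h1 y, ← Finset.mul_sum, Finset.sum_add_distrib,
      ← Finset.mul_sum, orth, orth, ← hn,
      if_congr (hiff1 σ τ) rfl rfl, if_congr (hiff2 σ τ) rfl rfl]
  -- the indicator function is nonzero
  have ht0 : t ≠ 0 := by
    intro h0
    have hj := hcap ⟨0, by omega⟩
    obtain ⟨b, hb⟩ := Finset.card_eq_one.mp hj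
    have hbmem : b ∈ Γt := by
      have : b ∈ Γ ⟨0, by omega⟩ ∩ Γt := hb ▸ Finset.mem_singleton_self b
      exact (Finset.mem_inter.mp this).2
    have h1 : t b = 1 := by rw [ht]; simp [indicZ2, hbmem]
    rw [h0] at h1
    simp at h1
  -- step 4: collapse the τ-sum
  have hsplit : ∀ σ τ : ι → ZMod 2,
      (c : ℂ) * (c : ℂ) * (Φ σ * (starRingEnd ℂ) (Φ τ)) * (1/2) *
          ((if τ = σ then ((2:ℂ)^n) else 0) + np r * (if τ = σ + t then ((2:ℂ)^n) else 0))
      = (if τ = σ then (c : ℂ) * (c : ℂ) * (2:ℂ)^n * (1/2) * (Φ σ * (starRingEnd ℂ) (Φ τ)) else 0)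
        + (if τ = σ + t then np r * ((c : ℂ) * (c : ℂ) * (2:ℂ)^n * (1/2)) * (Φ σ * (starRingEnd ℂ) (Φ τ)) else 0) := by
    intro σ τ
    by_cases h1 : τ = σ <;> by_cases h2 : τ = σ + t
    · exact absurd (by rwa [h1, left_eq_add] at h2) ht0
    · rw [if_pos h1, if_neg h2, if_pos h1, if_neg h2]; ring
    · rw [if_neg h1, if_pos h2, if_neg h1, if_pos h2]; ring
    · rw [if_neg h1, if_neg h2, if_neg h1, if_neg h2]; ring
  have hcc : (c : ℂ) * (c : ℂ) * (2:ℂ)^n = 1 := by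
    have hs2 : Real.sqrt 2 ^ n * Real.sqrt 2 ^ n = 2 ^ n := by
      rw [← mul_pow, Real.mul_self_sqrt (by norm_num)]
    have hcr : c * c * 2 ^ n = 1 := by
      rw [hc, ← mul_inv, hs2]
      exact inv_mul_cancel₀ (pow_ne_zero _ two_ne_zero)
    exact_mod_cast hcr
  -- unit norm of Φ
  have hIm : ∀ m : ℕ, Complex.I ^ m * (starRingEnd ℂ) (Complex.I ^ m) = 1 := by
    intro m
    rw [Complex.mul_conj, map_pow, Complex.normSq_I, one_pow, Complex.ofReal_one]
  have h5 : ∑ σ : ι → ZMod 2, Φ σ * (starRingEnd ℂ) (Φ σ) = 1 := by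
    rw [← hψ]
    unfold qInner
    refine Finset.sum_congr rfl fun σ _ => ?_
    rw [hΦ]
    simp only [map_mul]
    calc Complex.I ^ A σ * ψ σ * ((starRingEnd ℂ) (Complex.I ^ A σ) * (starRingEnd ℂ) (ψ σ))
        = (Complex.I ^ A σ * (starRingEnd ℂ) (Complex.I ^ A σ)) * (ψ σ * (starRingEnd ℂ) (ψ σ)) := by ring
      _ = (starRingEnd ℂ) (ψ σ) * ψ σ := by rw [hIm]; ring
  -- phase computation for the cross term
  have hsum_t : ∀ j, ∑ b ∈ Γ j, t b = 1 := by
    intro j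
    rw [ht]
    simp only [indicZ2, Finset.sum_ite_mem]
    rw [Finset.sum_const, hcap j, one_smul]
  have hAflip : ∀ σ : ι → ZMod 2, A σ + A (σ + t) = ∑ j, a j := by
    intro σ
    rw [hA]
    simp only
    rw [← Finset.sum_add_distrib]
    refine Finset.sum_congr rfl fun j _ => ?_
    have h1 : ∑ b ∈ Γ j, (σ + t) b = (∑ b ∈ Γ j, σ b) + 1 := by
      simp only [Pi.add_apply]
      rw [Finset.sum_add_distrib, hsum_t j]
    rw [h1, ← Nat.mul_add]
    have h2 : ∀ x : ZMod 2, x.val + (x + 1).val = 1 := by decide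
    rw [h2, Nat.mul_one]
  have h6 : ∀ σ : ι → ZMod 2,
      np r * (Φ σ * (starRingEnd ℂ) (Φ (σ + t)))
        = (-1 : ℂ) ^ A σ * (ψ σ * (starRingEnd ℂ) (ψ (σ + t))) := by
    intro σ
    rw [hΦ]
    simp only [map_mul]
    have hph := phase (A σ) (A (σ + t)) (∑ j, a j) (hAflip σ) hae
    calc np r * (Complex.I ^ A σ * ψ σ *
          ((starRingEnd ℂ) (Complex.I ^ A (σ + t)) * (starRingEnd ℂ) (ψ (σ + t))))
        = (np r * (Complex.I ^ A σ * (starRingEnd ℂ) (Complex.I ^ A (σ + t)))) *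
            (ψ σ * (starRingEnd ℂ) (ψ (σ + t))) := by ring
      _ = (-1 : ℂ) ^ A σ * (ψ σ * (starRingEnd ℂ) (ψ (σ + t))) := by
          rw [hr, rOf, hph]
  -- final assembly
  rw [hw2]
  rw [Finset.sum_congr rfl fun σ _ => Finset.sum_congr rfl fun τ _ => (key σ τ).trans (hsplit σ τ)]
  rw [Finset.sum_congr rfl fun σ _ => Finset.sum_add_distrib]
  rw [Finset.sum_add_distrib]
  rw [Finset.sum_congr rfl fun σ _ =>
    Finset.sum_ite_eq' univ σ (fun τ => (c : ℂ) * (c : ℂ) * (2:ℂ)^n * (1/2) * (Φ σ * (starRingEnd ℂ) (Φ τ)))]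
  rw [Finset.sum_congr rfl fun σ _ =>
    Finset.sum_ite_eq' univ (σ + t) (fun τ => np r * ((c : ℂ) * (c : ℂ) * (2:ℂ)^n * (1/2)) * (Φ σ * (starRingEnd ℂ) (Φ τ)))]
  simp only [Finset.mem_univ, if_true]
  have hfin1 : ∑ σ : ι → ZMod 2, (c : ℂ) * (c : ℂ) * (2:ℂ)^n * (1/2) * (Φ σ * (starRingEnd ℂ) (Φ σ))
      = 1/2 := by
    rw [← Finset.mul_sum, h5, mul_one, hcc, one_mul]
  have hfin2 : ∑ σ : ι → ZMod 2, np r * ((c : ℂ) * (c : ℂ) * (2:ℂ)^n * (1/2)) * (Φ σ * (starRingEnd ℂ) (Φ (σ + t)))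
      = 1/2 * ∑ σ : ι → ZMod 2, (-1 : ℂ) ^ A σ * (ψ σ * (starRingEnd ℂ) (ψ (σ + t))) := by
    rw [Finset.mul_sum]
    refine Finset.sum_congr rfl fun σ _ => ?_
    rw [← h6 σ, hcc]
    ring
  rw [hfin1, hfin2]
  ring
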